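/- Fix 0 < ε < 1 and an even integer k > 2/ε. Partition {0,...,n-1} into consecutive blocks K_1,...,K_{⌈2n/k⌉} of length k/2 (the last possibly shorter). For S ⊆ {0,...,n-1}, let B(S) be the number of blocks K_i intersecting S, and let ℬ(n,k,ε) = {S : B(S) ≤ (2n/k)(1-ε)}. Then card(ℬ(n,k,ε))/2^n → 0 as n → ∞. -/

import Mathlib

open Filter Topology

lemma count_bound (h t n : ℕ) (hh : 0 < h) :
    (((Finset.range n).powerset.filter (fun S : Finset ℕ =>
        (S.image (fun s => s / h)).card ≤ t)).card : ℕ)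
      ≤ 2 ^ (n / h + 1) * 2 ^ (t * h) := by
  classical
  set m := n / h + 1 with hm
  set B := (Finset.range m).powerset.filter (fun T => T.card ≤ t) with hB
  set ℬ := (Finset.range n).powerset.filter (fun S : Finset ℕ =>
        (S.image (fun s => s / h)).card ≤ t) with hℬ
  have key : ∀ S ∈ ℬ, S.image (fun s => s / h) ∈ B := by
    intro S hS
    simp only [hℬ, Finset.mem_filter, Finset.mem_powerset] at hS
    simp only [hB, Finset.mem_filter, Finset.mem_powerset]
    refine ⟨?_, hS.2⟩
    intro i hi
    simp only [Finset.mem_image] at hi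
    obtain ⟨s, hs, rfl⟩ := hi
    have hsn : s < n := Finset.mem_range.mp (hS.1 hs)
    have : s / h ≤ n / h := Nat.div_le_div_right hsn.le
    simp only [Finset.mem_range, hm]
    omega
  rw [Finset.card_eq_sum_card_fiberwise key]
  have fib : ∀ T ∈ B, (ℬ.filter (fun S => S.image (fun s => s / h) = T)).card
      ≤ 2 ^ (t * h) := by
    intro T hT
    simp only [hB, Finset.mem_filter, Finset.mem_powerset] at hT
    have hsub : ℬ.filter (fun S => S.image (fun s => s / h) = T)
        ⊆ (T.biUnion (fun i => Finset.Ico (i * h) (i * h + h))).powerset := by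
      intro S hS
      simp only [Finset.mem_filter] at hS
      rw [Finset.mem_powerset]
      intro s hs
      have himg : s / h ∈ T := by
        rw [← hS.2]; exact Finset.mem_image_of_mem _ hs
      rw [Finset.mem_biUnion]
      refine ⟨s / h, himg, ?_⟩
      have h1 : s / h * h + s % h = s := Nat.div_add_mod' s h
      have h2 := Nat.mod_lt s hh
      simp only [Finset.mem_Ico]
      omega
    calc (ℬ.filter (fun S => S.image (fun s => s / h) = T)).card
        ≤ _ := Finset.card_le_card hsub
      _ = 2 ^ (T.biUnion (fun i => Finset.Ico (i * h) (i * h + h))).card :=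
          Finset.card_powerset _
      _ ≤ 2 ^ (t * h) := by
          apply Nat.pow_le_pow_right (by norm_num)
          calc (T.biUnion (fun i => Finset.Ico (i * h) (i * h + h))).card
              ≤ ∑ i ∈ T, (Finset.Ico (i * h) (i * h + h)).card :=
                Finset.card_biUnion_le
            _ = ∑ i ∈ T, h := by
                apply Finset.sum_congr rfl; intro i _; simp
            _ = T.card * h := by rw [Finset.sum_const, smul_eq_mul]
            _ ≤ t * h := Nat.mul_le_mul_right _ hT.2
  calc ∑ T ∈ B, (ℬ.filter (fun S => S.image (fun s => s / h) = T)).card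
      ≤ ∑ _T ∈ B, 2 ^ (t * h) := Finset.sum_le_sum fib
    _ = B.card * 2 ^ (t * h) := by rw [Finset.sum_const, smul_eq_mul]
    _ ≤ 2 ^ m * 2 ^ (t * h) := by
        apply Nat.mul_le_mul_right
        calc B.card ≤ (Finset.range m).powerset.card := Finset.card_le_card
              (Finset.filter_subset _ _)
          _ = 2 ^ m := by rw [Finset.card_powerset, Finset.card_range]


/-- Fix `0 < ε < 1` and an even integer `k > 2/ε`. Partitioning
`{0,...,n-1}` into consecutive blocks of length `k/2` (the block of `s` having index
`s / (k/2)`), let `B(S)` be the number of blocks meeting `S`, and let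
`ℬ(n,k,ε)` be the family of subsets `S ⊆ {0,...,n-1}` with
`B(S) ≤ (2n/k)(1-ε)`. Then `card(ℬ(n,k,ε)) / 2^n → 0` as `n → ∞`. -/
theorem bad_sets_proportion_tendsto_zero
    (ε : ℝ) (hε0 : 0 < ε) (hε1 : ε < 1)
    (k : ℕ) (hkeven : Even k) (hk : 2 / ε < (k : ℝ)) :
    Tendsto (fun n : ℕ =>
      ((((Finset.range n).powerset.filter (fun S : Finset ℕ =>
          ((S.image (fun s => s / (k / 2))).card : ℝ) ≤ (2 * n / k) * (1 - ε))).card : ℝ)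
        / 2 ^ n))
      atTop (𝓝 0) := by
  classical
  have h2k : (2 : ℝ) < k := by
    have h1 : (2 : ℝ) / 1 < 2 / ε := div_lt_div_of_pos_left two_pos hε0 hε1
    have : (2 : ℝ) < 2 / ε := by simpa using h1
    exact this.trans hk
  have hk2 : 2 < k := by exact_mod_cast h2k
  have hkpos : (0 : ℝ) < k := by positivity
  set h := k / 2 with hhdef
  have hh : 0 < h := by omega
  have hhk : (h : ℝ) = k / 2 := by
    obtain ⟨c, hc⟩ := hkeven
    subst hc
    have : (c + c) / 2 = c := by omega
    rw [hhdef, this]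
    push_cast
    ring
  -- base ratio
  set r := (2 : ℝ) ^ (2 / (k : ℝ) - ε) with hrdef
  have hrneg : 2 / (k : ℝ) - ε < 0 := by
    have : 2 / (k : ℝ) < ε := by
      rw [div_lt_iff₀ hkpos]
      rw [div_lt_iff₀ hε0] at hk
      linarith
    linarith
  have hr0 : 0 < r := Real.rpow_pos_of_pos two_pos _
  have hr1 : r < 1 := Real.rpow_lt_one_of_one_lt_of_neg one_lt_two hrneg
  apply squeeze_zero (g := fun n : ℕ => 2 * r ^ n)
  · intro n
    positivity
  · intro n
    set t := ⌊(2 * (n : ℝ) / k) * (1 - ε)⌋₊ with htdef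
    -- step 1: cardinality bound
    have hsub : ((Finset.range n).powerset.filter (fun S : Finset ℕ =>
          ((S.image (fun s => s / (k / 2))).card : ℝ) ≤ (2 * n / k) * (1 - ε)))
        ⊆ ((Finset.range n).powerset.filter (fun S : Finset ℕ =>
          (S.image (fun s => s / h)).card ≤ t)) := by
      intro S hS
      simp only [Finset.mem_filter] at hS ⊢
      exact ⟨hS.1, Nat.le_floor hS.2⟩
    have hcard : (((Finset.range n).powerset.filter (fun S : Finset ℕ =>
          ((S.image (fun s => s / (k / 2))).card : ℝ) ≤ (2 * n / k) * (1 - ε))).card : ℝ)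
        ≤ 2 ^ (n / h + 1 + t * h) := by
      have := (Finset.card_le_card hsub).trans (count_bound h t n hh)
      calc (((Finset.range n).powerset.filter (fun S : Finset ℕ =>
          ((S.image (fun s => s / (k / 2))).card : ℝ) ≤ (2 * n / k) * (1 - ε))).card : ℝ)
          ≤ ((2 ^ (n / h + 1) * 2 ^ (t * h) : ℕ) : ℝ) := by exact_mod_cast this
        _ = 2 ^ (n / h + 1 + t * h) := by push_cast [pow_add]; ring
    -- step 2: exponent bound
    have hexp : ((n / h + 1 + t * h : ℕ) : ℝ) ≤ 2 * n / k + 1 + n * (1 - ε) := by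
      have e1 : ((n / h : ℕ) : ℝ) ≤ (n : ℝ) / h := Nat.cast_div_le
      have e2 : (n : ℝ) / h = 2 * n / k := by rw [hhk]; field_simp
      have e3 : ((t : ℕ) : ℝ) ≤ (2 * n / k) * (1 - ε) :=
        Nat.floor_le (mul_nonneg (by positivity) (by linarith))
      have e4 : ((t * h : ℕ) : ℝ) ≤ n * (1 - ε) := by
        push_cast
        calc (t : ℝ) * h ≤ ((2 * n / k) * (1 - ε)) * h := by
              apply mul_le_mul_of_nonneg_right e3 (by positivity)
          _ = n * (1 - ε) := by rw [hhk]; field_simp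
      push_cast at e4 ⊢
      push_cast at e1
      linarith [e1.trans_eq e2]
    -- step 3: real estimate
    have key : (2 : ℝ) ^ (n / h + 1 + t * h) / 2 ^ n ≤ 2 * r ^ n := by
      have lhs_eq : (2 : ℝ) ^ (n / h + 1 + t * h) / 2 ^ n
          = (2 : ℝ) ^ (((n / h + 1 + t * h : ℕ) : ℝ) - (n : ℝ)) := by
        rw [Real.rpow_sub two_pos, Real.rpow_natCast, Real.rpow_natCast]
      have rhs_eq : 2 * r ^ n = (2 : ℝ) ^ (1 + (2 / (k : ℝ) - ε) * n) := by
        rw [Real.rpow_add two_pos, Real.rpow_one, hrdef,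
          ← Real.rpow_natCast ((2:ℝ) ^ (2 / (k : ℝ) - ε)) n,
          ← Real.rpow_mul (by norm_num : (0:ℝ) ≤ 2)]
      rw [lhs_eq, rhs_eq]
      apply Real.rpow_le_rpow_of_exponent_le one_le_two
      have : 2 * (n : ℝ) / k + 1 + n * (1 - ε) - n = 1 + (2 / (k : ℝ) - ε) * n := by
        field_simp
        ring
      linarith [hexp, this.le, this.ge]
    calc (((Finset.range n).powerset.filter (fun S : Finset ℕ =>
          ((S.image (fun s => s / (k / 2))).card : ℝ) ≤ (2 * n / k) * (1 - ε))).card : ℝ)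
          / 2 ^ n
        ≤ (2 : ℝ) ^ (n / h + 1 + t * h) / 2 ^ n := by
          apply div_le_div_of_nonneg_right hcard (by positivity) |>.trans_eq rfl
      _ ≤ 2 * r ^ n := key
  · have := (tendsto_pow_atTop_nhds_zero_of_lt_one hr0.le hr1).const_mul (2 : ℝ)
    simpa using this
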